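/- arXiv:2511.19354 — 8 statements merged into one kernel-verified Lean document; each statement's English description precedes it below -/
import Mathlib

section
/- A function f : βℕ → βℕ is continuous if and only if there exist g : ℕ × ℕ → ℕ and v ∈ βℕ such that f(u) = Ultrafilter.map g (u ⊗ v) for every u ∈ βℕ. Moreover, if f is continuous and v ∈ βℕ satisfies f(n) ≤_RK v for every n ∈ ℕ, then there exists g : ℕ × ℕ → ℕ with f(u) = Ultrafilter.map g (u ⊗ v) for all u ∈ βℕ. -/
/-- The tensor (Fubini) product of ultrafilters: `S ∈ tensor u v` iff
`{x | {y | (x, y) ∈ S} ∈ v} ∈ u`. -/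
def tensor {X Y : Type*} (u : Ultrafilter X) (v : Ultrafilter Y) : Ultrafilter (X × Y) :=
  u.bind fun x => v.map fun y => (x, y)

/-- The Rudin–Keisler preorder: `u ≤_RK v` iff `u` is the image of `v` under some map. -/
def RKLE {X Y : Type*} (u : Ultrafilter X) (v : Ultrafilter Y) : Prop :=
  ∃ f : Y → X, Ultrafilter.map f v = u

/-- Isomorphism of ultrafilters: image under a bijection. -/
def UIso {X Y : Type*} (u : Ultrafilter X) (v : Ultrafilter Y) : Prop :=
  ∃ f : Y → X, Function.Bijective f ∧ Ultrafilter.map f v = u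

/-- An ultrafilter is principal iff it is `pure x` for some point `x`. -/
def IsPrincipal {X : Type*} (u : Ultrafilter X) : Prop := ∃ x, u = pure x

/-- A weak P-point: a nonprincipal ultrafilter on `ℕ` not in the closure of any countable
set of ultrafilters avoiding it and all principal ultrafilters. -/
def WeakPPoint (u : Ultrafilter ℕ) : Prop :=
  ¬ IsPrincipal u ∧ ∀ A : Set (Ultrafilter ℕ), A.Countable → u ∉ A →
    (∀ x ∈ A, ¬ IsPrincipal x) → u ∉ closure A

/-- A space `Z` is `u`-compact iff every pushforward of `u` to `Z` converges. -/
def UCompact {X : Type*} (u : Ultrafilter X) (Z : Type*) [TopologicalSpace Z] : Prop :=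
  ∀ f : X → Z, ∃ z : Z, ↑(Ultrafilter.map f u) ≤ nhds z

/-- The Comfort preorder: `u ≤_C v` iff every `v`-compact space is `u`-compact. -/
def ComfortLE {X Y : Type*} (u : Ultrafilter X) (v : Ultrafilter Y) : Prop :=
  ∀ (Z : Type*) [TopologicalSpace Z], UCompact v Z → UCompact u Z


section Aux

open Ultrafilter

lemma mem_tensor {u v : Ultrafilter ℕ} {s : Set (ℕ × ℕ)} :
    s ∈ tensor u v ↔ {n | {m | (n, m) ∈ s} ∈ v} ∈ u := by
  exact Iff.rfl

lemma cont_tensor_map (g : ℕ × ℕ → ℕ) (v : Ultrafilter ℕ) :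
    Continuous (fun u : Ultrafilter ℕ => Ultrafilter.map g (tensor u v)) := by
  rw [continuous_generateFrom_iff]
  rintro _ ⟨A, rfl⟩
  have : (fun u : Ultrafilter ℕ => Ultrafilter.map g (tensor u v)) ⁻¹'
      {w | A ∈ w} = {u : Ultrafilter ℕ | {n | (fun m => g (n, m)) ⁻¹' A ∈ v} ∈ u} := by
    ext u
    simp only [Set.mem_preimage, Set.mem_setOf_eq, Ultrafilter.mem_map, mem_tensor]
    rfl
  rw [this]
  exact ultrafilter_isOpen_basic _

lemma tensor_pure (n : ℕ) (v : Ultrafilter ℕ) :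
    tensor (pure n) v = Ultrafilter.map (fun m => (n, m)) v := by
  ext s
  simp [mem_tensor, Ultrafilter.mem_map, Set.preimage]

/-- Common RK upper bound for countably many ultrafilters on ℕ. -/
lemma exists_rk_upper (u : ℕ → Ultrafilter ℕ) : ∃ v : Ultrafilter ℕ, ∀ n, RKLE (u n) v := by
  classical
  obtain ⟨e⟩ : Nonempty (ℕ ≃ (ℕ →₀ ℕ)) := nonempty_equiv_of_countable
  set B : Set (Set ℕ) := {s | ∃ n, ∃ A ∈ u n, s = {m | e m n ∈ A}} with hB
  have hne : Filter.NeBot (Filter.generate B) := by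
    rw [Filter.generate_neBot_iff]
    intro t hts ht
    have h : ∀ s ∈ t, ∃ n, ∃ A, A ∈ u n ∧ s = {m | e m n ∈ A} := by
      intro s hs
      obtain ⟨n, A, hA, hsA⟩ := hts hs
      exact ⟨n, A, hA, hsA⟩
    choose! nn AA hAA hsA using h
    set T := ht.toFinset
    have hCmem : ∀ n, (⋂ s ∈ T.filter (fun s => nn s = n), AA s) ∈ u n := by
      intro n
      rw [← Ultrafilter.mem_coe, Filter.biInter_finset_mem]
      intro s hs
      rw [Finset.mem_filter] at hs
      have := hAA s (ht.mem_toFinset.mp hs.1)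
      rw [hs.2] at this
      exact this
    have hCne : ∀ n, (⋂ s ∈ T.filter (fun s => nn s = n), AA s).Nonempty := fun n => Ultrafilter.nonempty_of_mem (hCmem n)
    choose a ha using hCne
    set S := T.image nn with hS
    set p : ℕ →₀ ℕ := S.sum fun n => Finsupp.single n (a n) with hp
    have hpval : ∀ n ∈ S, p n = a n := by
      intro n hn
      rw [hp, Finsupp.finset_sum_apply]
      rw [Finset.sum_eq_single_of_mem n hn]
      · simp
      · intro b _ hbn
        exact Finsupp.single_eq_of_ne' hbn
    refine ⟨e.symm p, ?_⟩
    intro s hs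
    rw [hsA s hs]
    have hnS : nn s ∈ S := Finset.mem_image_of_mem nn (ht.mem_toFinset.mpr hs)
    have : e (e.symm p) (nn s) = a (nn s) := by
      rw [Equiv.apply_symm_apply]; exact hpval _ hnS
    show e (e.symm p) (nn s) ∈ AA s
    rw [this]
    have := ha (nn s)
    exact Set.mem_iInter₂.mp this s (Finset.mem_filter.mpr ⟨ht.mem_toFinset.mpr hs, rfl⟩)
  obtain ⟨v, hv⟩ := Filter.exists_ultrafilter_le (f := Filter.generate B)
  refine ⟨v, fun n => ⟨fun m => e m n, ?_⟩⟩
  have hle : (↑(Ultrafilter.map (fun m => e m n) v) : Filter ℕ) ≤ ↑(u n) := by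
    intro A hA
    exact hv (Filter.mem_generate_of_mem ⟨n, A, hA, rfl⟩)
  exact Ultrafilter.coe_injective ((u n).unique hle)

/-- Main construction for the second part. -/
lemma main_step (f : Ultrafilter ℕ → Ultrafilter ℕ) (hf : Continuous f)
    (v : Ultrafilter ℕ) (hv : ∀ n : ℕ, RKLE (f (pure n)) v) :
    ∃ g : ℕ × ℕ → ℕ, ∀ u : Ultrafilter ℕ, f u = Ultrafilter.map g (tensor u v) := by
  choose h hh using hv
  refine ⟨fun p => h p.1 p.2, ?_⟩
  have hF : Continuous (fun u : Ultrafilter ℕ =>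
      Ultrafilter.map (fun p : ℕ × ℕ => h p.1 p.2) (tensor u v)) :=
    cont_tensor_map _ v
  have heq : f = fun u : Ultrafilter ℕ =>
      Ultrafilter.map (fun p : ℕ × ℕ => h p.1 p.2) (tensor u v) := by
    apply denseRange_pure.equalizer hf hF
    funext n
    simp only [Function.comp_apply, tensor_pure, Ultrafilter.map_map]
    exact (hh n).symm
  exact fun u => congrFun heq u

end Aux

theorem stmt0 (f : Ultrafilter ℕ → Ultrafilter ℕ) :
    (Continuous f ↔ ∃ g : ℕ × ℕ → ℕ, ∃ v : Ultrafilter ℕ,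
      ∀ u : Ultrafilter ℕ, f u = Ultrafilter.map g (tensor u v)) ∧
    (Continuous f → ∀ v : Ultrafilter ℕ, (∀ n : ℕ, RKLE (f (pure n)) v) →
      ∃ g : ℕ × ℕ → ℕ, ∀ u : Ultrafilter ℕ, f u = Ultrafilter.map g (tensor u v)) := by
  constructor
  · constructor
    · intro hf
      obtain ⟨v, hv⟩ := exists_rk_upper (fun n => f (pure n))
      obtain ⟨g, hg⟩ := main_step f hf v hv
      exact ⟨g, v, hg⟩
    · rintro ⟨g, v, hg⟩
      have : f = fun u => Ultrafilter.map g (tensor u v) := funext hg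
      rw [this]
      exact cont_tensor_map g v
  · exact main_step f
end

section
/- Let u ∈ βℕ and let A ⊆ βℕ be countable. The following are equivalent: (i) u ∈ closure(A); (ii) there exist f : ℕ → βℕ with range f ⊆ A and v ∈ βℕ such that f̃(v) = u; (iii) there exist g : ℕ × ℕ → ℕ and v, w ∈ βℕ such that Ultrafilter.map (fun j => g (i, j)) w ∈ A for every i ∈ ℕ and u = Ultrafilter.map g (v ⊗ w). Moreover, if u ∈ closure(A) and f : ℕ → βℕ satisfies range f = A, then there exists v ∈ βℕ with f̃(v) = u. -/
open Ultrafilter Filter Set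

lemma umem_bind {α β} {f : Ultrafilter α} {m : α → Ultrafilter β} {s : Set β} :
    s ∈ f.bind m ↔ {x | s ∈ m x} ∈ f := Iff.rfl

lemma joinM_map {α β} (v : Ultrafilter α) (f : α → Ultrafilter β) :
    joinM (Ultrafilter.map f v) = v.bind f := by
  ext s
  change s ∈ (Ultrafilter.map f v).bind id ↔ _
  simp [umem_bind, Ultrafilter.mem_map]

lemma extend_eq_bind (f : ℕ → Ultrafilter ℕ) (v : Ultrafilter ℕ) :
    Ultrafilter.extend f v = v.bind f := by
  rw [ultrafilter_extend_eq_iff, ultrafilter_converges_iff, joinM_map]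

lemma umap_bind {α β γ} (h : β → γ) (D : Ultrafilter α) (r : α → Ultrafilter β) :
    Ultrafilter.map h (D.bind r) = D.bind fun k => Ultrafilter.map h (r k) := by
  ext s; simp [umem_bind, Ultrafilter.mem_map]

lemma bind_eq_of_eventually {α β} (D : Ultrafilter α) (r : α → Ultrafilter β)
    (q : Ultrafilter β) (h : {k | r k = q} ∈ D) : D.bind r = q := by
  ext s
  constructor
  · intro hs
    have h2 : {k | s ∈ r k} ∈ D := hs
    obtain ⟨k, hk1, hk2⟩ := Filter.nonempty_of_mem (Filter.inter_mem h h2)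
    rwa [← hk1]
  · intro hs
    exact umem_bind.2 (D.toFilter.mem_of_superset h fun k hk => by simp_all)

lemma map_fst_tensor {X Y : Type*} (u : Ultrafilter X) (v : Ultrafilter Y) :
    Ultrafilter.map Prod.fst (tensor u v) = u := by
  ext s
  simp only [tensor, Ultrafilter.mem_map, umem_bind]
  have h : ∀ x : X, ((fun y : Y => (x, y)) ⁻¹' (Prod.fst ⁻¹' s) ∈ v ↔ x ∈ s) := by
    intro x; by_cases hx : x ∈ s <;> simp [Set.preimage, hx] <;> exact Filter.univ_mem
  simp only [h]; rfl

lemma map_snd_tensor {X Y : Type*} (u : Ultrafilter X) (v : Ultrafilter Y) :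
    Ultrafilter.map Prod.snd (tensor u v) = v := by
  ext s
  simp only [tensor, Ultrafilter.mem_map, umem_bind, Ultrafilter.mem_map]
  by_cases hs : s ∈ v <;> simp [Set.preimage, hs] <;> exact Filter.univ_mem

lemma map_tensor_eq_bind (g : ℕ × ℕ → ℕ) (v w : Ultrafilter ℕ) :
    Ultrafilter.map g (tensor v w) = v.bind fun i => Ultrafilter.map (fun j => g (i, j)) w := by
  ext s; simp [tensor, umem_bind, Ultrafilter.mem_map, Set.preimage]

/-- iterated tensor as an ultrafilter on lists -/
noncomputable def LU : (ℕ → Ultrafilter ℕ) → ℕ → Ultrafilter (List ℕ)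
  | _, 0 => pure []
  | f, (k+1) => Ultrafilter.map (fun p : ℕ × List ℕ => p.1 :: p.2)
      (tensor (f 0) (LU (fun n => f (n+1)) k))

lemma LU_marginal : ∀ (k : ℕ) (f : ℕ → Ultrafilter ℕ) (n : ℕ), n < k →
    Ultrafilter.map (fun l => l.getD n 0) (LU f k) = f n := by
  intro k
  induction k with
  | zero => intro f n hn; omega
  | succ k ih =>
    intro f n hn
    rw [LU, Ultrafilter.map_map]
    match n with
    | 0 =>
      have : ((fun l => l.getD 0 0) ∘ fun p : ℕ × List ℕ => p.1 :: p.2) = Prod.fst := by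
        funext p; simp
      rw [this, map_fst_tensor]
    | (m+1) =>
      have : ((fun l => l.getD (m+1) 0) ∘ fun p : ℕ × List ℕ => p.1 :: p.2) =
          (fun l => l.getD m 0) ∘ Prod.snd := by
        funext p; simp
      rw [this, ← Ultrafilter.map_map, map_snd_tensor, ih (fun n => f (n+1)) m (by omega)]

lemma exists_common_upper (f : ℕ → Ultrafilter ℕ) :
    ∃ (w : Ultrafilter ℕ) (g : ℕ × ℕ → ℕ),
      ∀ i, Ultrafilter.map (fun j => g (i, j)) w = f i := by
  have : (Filter.cofinite : Filter ℕ).NeBot := Filter.cofinite_neBot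
  let D : Ultrafilter ℕ := Ultrafilter.of Filter.cofinite
  have hD : ∀ n : ℕ, {k | n < k} ∈ D := by
    intro n
    apply Ultrafilter.of_le Filter.cofinite
    rw [Filter.mem_cofinite]
    exact (Set.finite_Iic n).subset (fun k hk => by simpa using hk)
  let e : List ℕ ≃ ℕ := Denumerable.eqv (List ℕ)
  refine ⟨Ultrafilter.map e (D.bind (LU f)), fun p => (e.symm p.2).getD p.1 0, fun i => ?_⟩
  rw [Ultrafilter.map_map]
  have h1 : ((fun j => (e.symm j).getD i 0) ∘ e) = fun l => l.getD i 0 := by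
    funext l; simp
  rw [h1, umap_bind]
  exact bind_eq_of_eventually D _ (f i)
    (D.toFilter.mem_of_superset (hD i) fun k hk => LU_marginal k f i hk)

lemma extend_mem_closure (f : ℕ → Ultrafilter ℕ) (v : Ultrafilter ℕ) :
    Ultrafilter.extend f v ∈ closure (Set.range f) := by
  have h : ↑(Ultrafilter.map f v) ≤ nhds (Ultrafilter.extend f v) :=
    ultrafilter_extend_eq_iff.mp rfl
  exact mem_closure_of_tendsto h (Filter.Eventually.of_forall fun n => Set.mem_range_self n)

lemma closure_range_subset (f : ℕ → Ultrafilter ℕ) :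
    closure (Set.range f) ⊆ Set.range (Ultrafilter.extend f) := by
  apply closure_minimal
  · rintro _ ⟨n, rfl⟩
    exact ⟨pure n, congrFun (ultrafilter_extend_extends f) n⟩
  · exact (isCompact_range (continuous_ultrafilter_extend f)).isClosed

theorem stmt1 (u : Ultrafilter ℕ) (A : Set (Ultrafilter ℕ)) (hA : A.Countable) :
    ((u ∈ closure A ↔ ∃ f : ℕ → Ultrafilter ℕ, Set.range f ⊆ A ∧
        ∃ v : Ultrafilter ℕ, Ultrafilter.extend f v = u) ∧
      (u ∈ closure A ↔ ∃ g : ℕ × ℕ → ℕ, ∃ v w : Ultrafilter ℕ,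
        (∀ i : ℕ, Ultrafilter.map (fun j => g (i, j)) w ∈ A) ∧
        u = Ultrafilter.map g (tensor v w))) ∧
    (u ∈ closure A → ∀ f : ℕ → Ultrafilter ℕ, Set.range f = A →
      ∃ v : Ultrafilter ℕ, Ultrafilter.extend f v = u) := by
  have moreover : u ∈ closure A → ∀ f : ℕ → Ultrafilter ℕ, Set.range f = A →
      ∃ v : Ultrafilter ℕ, Ultrafilter.extend f v = u := by
    intro hu f hf
    obtain ⟨v, hv⟩ := closure_range_subset f (by rw [hf]; exact hu)
    exact ⟨v, hv⟩
  have h12 : u ∈ closure A ↔ ∃ f : ℕ → Ultrafilter ℕ, Set.range f ⊆ A ∧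
      ∃ v : Ultrafilter ℕ, Ultrafilter.extend f v = u := by
    constructor
    · intro hu
      have hne : A.Nonempty := by
        rcases A.eq_empty_or_nonempty with h | h
        · rw [h, closure_empty] at hu; exact absurd hu (Set.notMem_empty u)
        · exact h
      obtain ⟨f, hf⟩ := hA.exists_eq_range hne
      obtain ⟨v, hv⟩ := moreover hu f hf.symm
      exact ⟨f, hf ▸ Set.Subset.rfl, v, hv⟩
    · rintro ⟨f, hfA, v, rfl⟩
      exact closure_mono hfA (extend_mem_closure f v)
  refine ⟨⟨h12, ?_⟩, moreover⟩
  constructor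
  · intro hu
    obtain ⟨f, hfA, v, hv⟩ := h12.mp hu
    obtain ⟨w, g, hg⟩ := exists_common_upper f
    refine ⟨g, v, w, fun i => by rw [hg i]; exact hfA (Set.mem_range_self i), ?_⟩
    rw [map_tensor_eq_bind]
    rw [extend_eq_bind] at hv
    rw [← hv]
    congr 1
    funext i
    exact (hg i).symm
  · rintro ⟨g, v, w, hcol, rfl⟩
    rw [map_tensor_eq_bind, ← extend_eq_bind]
    exact closure_mono (Set.range_subset_iff.mpr hcol)
      (extend_mem_closure (fun i => Ultrafilter.map (fun j => g (i, j)) w) v)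
end

section
/- If u ∈ βℕ is a weak P-point, v, w ∈ βℕ, and u ≤_RK v ⊗ w, then u ≤_RK v or u ≤_RK w. -/
lemma mem_ubind {α β : Type*} {f : Ultrafilter α} {m : α → Ultrafilter β} {s : Set β} :
    s ∈ f.bind m ↔ {x | s ∈ m x} ∈ f := by
  change s ∈ (Ultrafilter.ofComplNotMemIff (Filter.bind ↑f fun x => ↑(m x)) _) ↔ _
  simp [Ultrafilter.ofComplNotMemIff, Filter.mem_bind]
  rfl

lemma joinM_eq {α : Type*} (x : Ultrafilter (Ultrafilter α)) : joinM x = x.bind id := rfl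

theorem stmt3 (u v w : Ultrafilter ℕ) (hu : WeakPPoint u)
    (h : RKLE u (tensor v w)) : RKLE u v ∨ RKLE u w := by
  obtain ⟨f, hf⟩ := h
  set g : ℕ → Ultrafilter ℕ := fun n => Ultrafilter.map (fun m => f (n, m)) w with hg
  have hjoin : joinM (Ultrafilter.map g v) = u := by
    rw [← hf]
    ext s
    rw [joinM_eq, mem_ubind]
    simp only [Ultrafilter.mem_map, hg]
    rw [show tensor v w = v.bind fun x => w.map fun y => (x, y) from rfl, mem_ubind]
    simp [Set.preimage, Ultrafilter.mem_map]
  have hconv : ↑(Ultrafilter.map g v) ≤ nhds u := ultrafilter_converges_iff.mpr hjoin.symm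
  by_cases h1 : {n | g n = u} ∈ v
  · -- u ≤ w
    right
    have : {n | g n = u}.Nonempty := Ultrafilter.nonempty_of_mem h1
    obtain ⟨n, hn⟩ := this
    exact ⟨fun m => f (n, m), hn⟩
  by_cases h2 : {n | IsPrincipal (g n)} ∈ v
  · -- u ≤ v
    left
    classical
    choose hfun hfunspec using fun n (hn : IsPrincipal (g n)) => hn
    refine ⟨fun n => if hn : IsPrincipal (g n) then hfun n hn else 0, ?_⟩
    have heq : Ultrafilter.map (fun n => pure ((fun n => if hn : IsPrincipal (g n) then hfun n hn else 0) n) : ℕ → Ultrafilter ℕ) v = Ultrafilter.map g v := by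
      apply Ultrafilter.coe_injective
      apply Filter.map_congr
      filter_upwards [h2] with n hn
      simp only [dif_pos hn]
      exact (hfunspec n hn).symm
    have : joinM (Ultrafilter.map (fun n => pure ((fun n => if hn : IsPrincipal (g n) then hfun n hn else 0) n) : ℕ → Ultrafilter ℕ) v) = u := by
      rw [heq, hjoin]
    rw [← this]
    ext s
    rw [joinM_eq, mem_ubind, Ultrafilter.mem_map]
    constructor
    · intro hs; exact v.sets_of_superset hs (by intro n hn; simpa using hn)
    · intro hs; exact v.sets_of_superset hs (by intro n hn; simpa using hn)
  · -- contradiction with weak P-point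
    exfalso
    have hA' : {n | g n ≠ u ∧ ¬ IsPrincipal (g n)} ∈ v := by
      have h3 : ({n | g n = u}ᶜ ∩ {n | IsPrincipal (g n)}ᶜ : Set ℕ) ∈ v := Filter.inter_mem (Ultrafilter.compl_mem_iff_notMem.mpr h1) (Ultrafilter.compl_mem_iff_notMem.mpr h2)
      exact v.sets_of_superset h3 (fun n hn => ⟨hn.1, hn.2⟩)
    set A : Set (Ultrafilter ℕ) := g '' {n | g n ≠ u ∧ ¬ IsPrincipal (g n)} with hA
    have hcount : A.Countable := Set.Countable.image (Set.to_countable _) g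
    have huA : u ∉ A := by
      rintro ⟨n, ⟨hne, _⟩, rfl⟩; exact hne rfl
    have hprin : ∀ x ∈ A, ¬ IsPrincipal x := by
      rintro x ⟨n, ⟨_, hp⟩, rfl⟩; exact hp
    have hclo : u ∈ closure A := by
      rw [mem_closure_iff_ultrafilter]
      refine ⟨Ultrafilter.map g v, ?_, hconv⟩
      rw [Ultrafilter.mem_map]
      exact v.sets_of_superset hA' (fun n hn => Set.mem_image_of_mem g hn)
    exact hu.2 A hcount huA hprin hclo
end

section
/- Let u ∈ βℕ be a weak P-point, n ∈ ℕ, and v₀, …, vₙ ∈ βℕ arbitrary ultrafilters. If u ≤_C v₀ ⊗ ⋯ ⊗ vₙ (the left-associated iterated tensor product, an ultrafilter on the (n+1)-fold product ℕ × ⋯ × ℕ), then u ≤_RK v_k for some 0 ≤ k ≤ n. -/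
/-- The `(n+1)`-fold left-associated product type `ℕ × ⋯ × ℕ`. -/
def iterType : ℕ → Type
  | 0 => ℕ
  | n + 1 => iterType n × ℕ

/-- The left-associated iterated tensor product `v₀ ⊗ ⋯ ⊗ vₙ`. -/
def iterTensor (v : ℕ → Ultrafilter ℕ) : (n : ℕ) → Ultrafilter (iterType n)
  | 0 => v 0
  | n + 1 => tensor (iterTensor v n) (v (n + 1))

instance iterType.countable : ∀ n, Countable (iterType n)
  | 0 => inferInstanceAs (Countable ℕ)
  | n + 1 => have := iterType.countable n; inferInstanceAs (Countable (iterType n × ℕ))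

/-- key dichotomy from the weak P-point property -/
lemma dichotomy {X : Type*} [Countable X] (u : Ultrafilter ℕ) (hu : WeakPPoint u)
    (μ : Ultrafilter X) (h : X → Ultrafilter ℕ) (heq : μ.bind h = u) :
    {x | h x = u} ∈ μ ∨ {x | IsPrincipal (h x)} ∈ μ := by
  by_contra hc
  push_neg at hc
  obtain ⟨h1, h2⟩ := hc
  have hS : {x | h x = u}ᶜ ∩ {x | IsPrincipal (h x)}ᶜ ∈ μ :=
    Filter.inter_mem (Ultrafilter.compl_mem_iff_notMem.2 h1)
      (Ultrafilter.compl_mem_iff_notMem.2 h2)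
  set S := {x | h x = u}ᶜ ∩ {x | IsPrincipal (h x)}ᶜ
  have hA : u ∈ closure (h '' S) := by
    rw [mem_closure_iff_ultrafilter]
    refine ⟨Ultrafilter.map h μ, Filter.image_mem_map hS, ?_⟩
    rw [ultrafilter_converges_iff]
    exact heq.symm
  refine hu.2 (h '' S) ((Set.countable_univ.mono (Set.subset_univ S)).image h) ?_ ?_ hA
  · rintro ⟨x, hx, hxu⟩; exact hx.1 hxu
  · rintro w ⟨x, hx, rfl⟩; exact hx.2

/-- if h is principal μ-often and bind h μ = u, then u is an RK image of μ -/
lemma principal_case {X : Type*} (u : Ultrafilter ℕ)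
    (μ : Ultrafilter X) (h : X → Ultrafilter ℕ) (heq : μ.bind h = u)
    (hP : {x | IsPrincipal (h x)} ∈ μ) : ∃ p : X → ℕ, Ultrafilter.map p μ = u := by
  classical
  set p : X → ℕ := fun x => if hx : IsPrincipal (h x) then hx.choose else 0 with hpdef
  have hkey : ∀ x, IsPrincipal (h x) → h x = pure (p x) := by
    intro x hx
    rw [hpdef]
    simp only [dif_pos hx]
    exact hx.choose_spec
  refine ⟨p, ?_⟩
  ext s
  rw [Ultrafilter.mem_map]
  rw [← heq]
  change _ ↔ {x | s ∈ h x} ∈ μ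
  constructor
  · intro hm
    refine μ.toFilter.mem_of_superset (Filter.inter_mem hm hP) ?_
    rintro x ⟨hxs, hx⟩
    show s ∈ h x
    rw [hkey x hx]
    exact Ultrafilter.mem_pure.2 hxs
  · intro hm
    refine μ.toFilter.mem_of_superset (Filter.inter_mem hm hP) ?_
    rintro x ⟨hxs, hx⟩
    have : s ∈ h x := hxs
    rw [hkey x hx, Ultrafilter.mem_pure] at this
    exact this

lemma map_bind_eq {X : Type*} (μ : Ultrafilter X) (F : X → Ultrafilter ℕ) (g : ℕ → ℕ) :
    Ultrafilter.map g (μ.bind F) = μ.bind (fun x => Ultrafilter.map g (F x)) := rfl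

lemma rk_iter (u : Ultrafilter ℕ) (hu : WeakPPoint u) (v : ℕ → Ultrafilter ℕ) :
    ∀ n, RKLE u (iterTensor v n) → ∃ k ≤ n, RKLE u (v k) := by
  intro n
  induction n with
  | zero => exact fun h => ⟨0, le_refl 0, h⟩
  | succ n ih =>
    rintro ⟨g, hg⟩
    set μ := iterTensor v n
    set ν := v (n + 1)
    have hbind : μ.bind (fun x => Ultrafilter.map (fun y => g (x, y)) ν) = u := hg
    rcases dichotomy u hu μ _ hbind with hc | hc
    · obtain ⟨x, hx⟩ := Ultrafilter.nonempty_of_mem hc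
      exact ⟨n + 1, le_refl _, fun y => g (x, y), hx⟩
    · obtain ⟨p, hp⟩ := principal_case u μ _ hbind hc
      obtain ⟨k, hk, hrk⟩ := ih ⟨p, hp⟩
      exact ⟨k, hk.trans (Nat.le_succ n), hrk⟩

lemma pure_not_rk (u : Ultrafilter ℕ) (hu : WeakPPoint u) (m : ℕ) : ¬ RKLE u (pure m) := by
  rintro ⟨g, hg⟩
  rw [Ultrafilter.map_pure] at hg
  exact hu.1 ⟨g m, hg.symm⟩

lemma ucompact_ulift {X : Type} {Z : Type} [TopologicalSpace Z] (μ : Ultrafilter X)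
    (h : UCompact μ Z) : UCompact μ (ULift.{w} Z) := by
  intro f
  obtain ⟨z, hz⟩ := h (fun x => (f x).down)
  refine ⟨ULift.up z, ?_⟩
  have h2 : Filter.Tendsto (fun x => (f x).down) ↑μ (nhds z) := hz
  have h3 := (Homeomorph.ulift.symm.continuous.tendsto z).comp h2
  exact h3

theorem stmt4 (u : Ultrafilter ℕ) (hu : WeakPPoint u) (n : ℕ) (v : ℕ → Ultrafilter ℕ)
    (h : ComfortLE u (iterTensor v n)) : ∃ k ≤ n, RKLE u (v k) := by
  by_contra hcon
  push_neg at hcon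
  set μ := iterTensor v n with hμ
  have hnRK : ¬ RKLE u μ := fun hr => by
    obtain ⟨k, hk, hrk⟩ := rk_iter u hu v n hr
    exact hcon k hk hrk
  have hZ : UCompact μ {w : Ultrafilter ℕ // ¬ RKLE u w} := by
    intro f
    have hclaim : ¬ RKLE u (μ.bind fun x => (f x).1) := by
      rintro ⟨g, hg⟩
      have hbind : μ.bind (fun x => Ultrafilter.map g (f x).1) = u := hg
      rcases dichotomy u hu μ _ hbind with hc | hc
      · obtain ⟨x, hx⟩ := Ultrafilter.nonempty_of_mem hc
        exact (f x).2 ⟨g, hx⟩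
      · obtain ⟨p, hp⟩ := principal_case u μ _ hbind hc
        exact hnRK ⟨p, hp⟩
    refine ⟨⟨μ.bind fun x => (f x).1, hclaim⟩, ?_⟩
    have : Filter.Tendsto (Subtype.val ∘ f) ↑μ (nhds (μ.bind fun x => (f x).1)) := by
      have : ↑(Ultrafilter.map (fun x => (f x).1) μ) ≤
          nhds (μ.bind fun x => (f x).1) := by
        rw [ultrafilter_converges_iff]; rfl
      exact this
    exact tendsto_subtype_rng.2 this
  obtain ⟨z0, hz0⟩ := h (ULift {w : Ultrafilter ℕ // ¬ RKLE u w}) (ucompact_ulift _ hZ)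
    (fun m => ULift.up ⟨pure m, pure_not_rk u hu m⟩)
  set z : {w : Ultrafilter ℕ // ¬ RKLE u w} := z0.down with hzdef
  have hz : Filter.Tendsto (fun m => (⟨pure m, pure_not_rk u hu m⟩ :
      {w : Ultrafilter ℕ // ¬ RKLE u w})) ↑u (nhds z) := by
    have h2 : Filter.Tendsto
        (fun m => ULift.up (⟨pure m, pure_not_rk u hu m⟩ :
          {w : Ultrafilter ℕ // ¬ RKLE u w})) ↑u (nhds z0) := hz0
    exact (Homeomorph.ulift.continuous.tendsto z0).comp h2
  have hzv : Filter.Tendsto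
      (Subtype.val ∘ (fun m => (⟨pure m, pure_not_rk u hu m⟩ :
        {w : Ultrafilter ℕ // ¬ RKLE u w}))) ↑u (nhds z.1) :=
    tendsto_subtype_rng.1 hz
  have : z.1 = joinM (Ultrafilter.map (fun m => (pure m : Ultrafilter ℕ)) u) :=
    ultrafilter_converges_iff.1 hzv
  have hzu : z.1 = u := by
    rw [this]
    ext s
    change {m | s ∈ (pure m : Ultrafilter ℕ)} ∈ u ↔ s ∈ u
    simp [Ultrafilter.mem_pure]
  exact z.2 ⟨id, by rw [Ultrafilter.map_id, hzu]⟩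
end

section
/- Let κ and λ be cardinals with κ ≤ λ⁺, and let (P, ≤) be a partially ordered set of cardinality at most λ such that for every x ∈ P the lower cone {y ∈ P : y ≤ x} has cardinality < κ. Then for every set Λ of cardinality λ there exists a map f : P → {s ⊆ Λ : |s| < κ} such that for all x, y ∈ P, x ≤ y if and only if f(x) ⊆ f(y); i.e., (P, ≤) embeds isomorphically into the subsets of Λ of cardinality < κ ordered by inclusion. -/
universe u

theorem stmt7 (κ lam : Cardinal.{u}) (hκ : κ ≤ Order.succ lam)
    (P : Type u) [PartialOrder P] (hP : Cardinal.mk P ≤ lam)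
    (hlc : ∀ x : P, Cardinal.mk {y : P // y ≤ x} < κ)
    (Λ : Type u) (hΛ : Cardinal.mk Λ = lam) :
    ∃ f : P → Set Λ, (∀ x : P, Cardinal.mk ↥(f x) < κ) ∧
      ∀ x y : P, x ≤ y ↔ f x ⊆ f y := by
  obtain ⟨g⟩ : Nonempty (P ↪ Λ) := by
    rw [← Cardinal.le_def, hΛ]; exact hP
  refine ⟨fun x => g '' {y | y ≤ x}, ?_, ?_⟩
  · intro x
    calc Cardinal.mk ↥(g '' {y | y ≤ x}) = Cardinal.mk {y : P // y ≤ x} :=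
          Cardinal.mk_image_eq g.injective
      _ < κ := hlc x
  · intro x y
    constructor
    · intro h _ ⟨z, hz, hze⟩
      exact ⟨z, le_trans hz h, hze⟩
    · intro h
      obtain ⟨z, hz, hze⟩ := h ⟨x, le_refl x, rfl⟩
      rwa [← g.injective hze]
end

section
/- Fix a ladder system on ω₁. Let u = (u_α)_{α<ω₁} be a sequence in βℕ such that u_α is nonprincipal for every α ∈ Lim(ω₁), let (f_α)_{α<ω₁} be an admissible family for u, and set v_α := f̃_α(u_α). Then u_β ≤_RK v_α whenever β ≤ α < ω₁. -/
/-- The first uncountable ordinal `ω₁`. -/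
noncomputable def omega1 : Ordinal := (Cardinal.aleph 1).ord

/-- A ladder system on `ω₁`: for each nonzero limit `α < ω₁`, a strictly increasing
`ω`-sequence of ordinals cofinal in `α`. -/
def IsLadderSystem (L : Ordinal → ℕ → Ordinal) : Prop :=
  ∀ α : Ordinal, α < omega1 → Order.IsSuccLimit α →
    StrictMono (L α) ∧ (∀ i : ℕ, L α i < α) ∧ ∀ β < α, ∃ i : ℕ, β ≤ L α i

/-- `vSeq u f α = f̃_α(u_α)`. -/
noncomputable def vSeq (u : Ordinal → Ultrafilter ℕ) (f : Ordinal → ℕ → Ultrafilter ℕ)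
    (α : Ordinal) : Ultrafilter ℕ :=
  Ultrafilter.extend (f α) (u α)

/-- `(f_α)_{α<ω₁}` is admissible for `u = (u_α)_{α<ω₁}` (w.r.t. the ladder system `L`):
writing `v_α := f̃_α(u_α)`, the map `f_0` is injective with principal values; at a successor
`β+1`, `f_{β+1}` is injective with discrete range and all values isomorphic to `v_β`; at a
nonzero limit `α`, `f_α` is injective with discrete range and `f_α(i) ≅ v_{α_i}`. -/
def Admissible (L : Ordinal → ℕ → Ordinal) (u : Ordinal → Ultrafilter ℕ)
    (f : Ordinal → ℕ → Ultrafilter ℕ) : Prop :=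
  (Function.Injective (f 0) ∧ ∀ i : ℕ, IsPrincipal (f 0 i)) ∧
  (∀ β : Ordinal, β + 1 < omega1 →
    Function.Injective (f (β + 1)) ∧ DiscreteTopology (Set.range (f (β + 1))) ∧
    ∀ i : ℕ, UIso (f (β + 1) i) (vSeq u f β)) ∧
  ∀ α : Ordinal, α < omega1 → Order.IsSuccLimit α →
    Function.Injective (f α) ∧ DiscreteTopology (Set.range (f α)) ∧
    ∀ i : ℕ, UIso (f α i) (vSeq u f (L α i))

section Aux

open Ultrafilter Set Filter

lemma extend_eq_bind' (F : ℕ → Ultrafilter ℕ) (w : Ultrafilter ℕ) :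
    Ultrafilter.extend F w = w.bind F := by
  rw [ultrafilter_extend_eq_iff, ultrafilter_converges_iff]
  ext S
  change ({v : Ultrafilter ℕ | S ∈ v} ∈ w.map F) ↔ _
  rfl

lemma ult_eq_of_le' {u v : Ultrafilter ℕ} (h : ∀ S ∈ u, S ∈ v) : v = u := by
  rw [← Ultrafilter.coe_le_coe]; exact fun S hS => h S hS

lemma rkle_trans' {a b c : Ultrafilter ℕ} (h1 : RKLE a b) (h2 : RKLE b c) : RKLE a c := by
  obtain ⟨k, hk⟩ := h1; obtain ⟨m, hm⟩ := h2
  exact ⟨k ∘ m, by rw [← Ultrafilter.map_map, hm, hk]⟩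

lemma uiso_rkle_symm' {a b : Ultrafilter ℕ} (h : UIso a b) : RKLE b a := by
  obtain ⟨k, hb, hk⟩ := h
  refine ⟨(Equiv.ofBijective k hb).symm, ?_⟩
  rw [← hk, Ultrafilter.map_map]
  have h2 : ((Equiv.ofBijective k hb).symm ∘ k) = id := by
    funext x; exact (Equiv.ofBijective k hb).symm_apply_apply x
  rw [h2]
  exact Ultrafilter.map_id b

lemma exists_partition' {F : ℕ → Ultrafilter ℕ} (hinj : Function.Injective F)
    (hd : DiscreteTopology (Set.range F)) :
    ∃ g : ℕ → ℕ, ∀ j, {n | g n = j} ∈ F j := by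
  classical
  have hA : ∀ j : ℕ, ∃ A : Set ℕ, A ∈ F j ∧ ∀ k, k ≠ j → A ∉ F k := by
    intro j
    have hop : IsOpen ({⟨F j, mem_range_self j⟩} : Set (Set.range F)) := isOpen_discrete _
    rw [isOpen_induced_iff] at hop
    obtain ⟨U, hU, hUeq⟩ := hop
    have hj : F j ∈ U := by
      have : (⟨F j, mem_range_self j⟩ : Set.range F) ∈ Subtype.val ⁻¹' U := by
        rw [hUeq]; rfl
      exact this
    obtain ⟨B, ⟨A, rfl⟩, hjB, hBU⟩ := ultrafilterBasis_is_basis.exists_subset_of_mem_open hj hU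
    refine ⟨A, hjB, fun k hk hAk => ?_⟩
    have h1 : (⟨F k, mem_range_self k⟩ : Set.range F) ∈ Subtype.val ⁻¹' U := hBU hAk
    rw [hUeq] at h1
    exact hk (hinj (congrArg Subtype.val h1))
  choose A hA1 hA2 using hA
  refine ⟨fun n => if h : ∃ j, n ∈ A j then Nat.find h else 0, fun j => ?_⟩
  have hS : (A j ∩ ⋂ k ∈ Finset.range j, (A k)ᶜ) ∈ F j := by
    refine inter_mem (hA1 j) ((Filter.biInter_finset_mem _).2 fun k hk => ?_)
    exact Ultrafilter.compl_mem_iff_notMem.2 (hA2 k j (Finset.mem_range.1 hk).ne')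
  refine mem_of_superset hS fun n hn => ?_
  obtain ⟨hn1, hn2⟩ := hn
  simp only [mem_setOf_eq]
  have hex : ∃ j, n ∈ A j := ⟨j, hn1⟩
  rw [dif_pos hex, Nat.find_eq_iff]
  refine ⟨hn1, fun k hk hkA => ?_⟩
  have : n ∈ (A k)ᶜ := by
    have := mem_iInter₂.1 hn2 k (Finset.mem_range.2 hk)
    exact this
  exact this hkA

lemma rkle_self_bind' {F : ℕ → Ultrafilter ℕ} {w : Ultrafilter ℕ} {g : ℕ → ℕ}
    (hg : ∀ j, {n | g n = j} ∈ F j) : RKLE w (w.bind F) := by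
  refine ⟨g, ult_eq_of_le' fun S hS => ?_⟩
  rw [Ultrafilter.mem_map]
  change {j | g ⁻¹' S ∈ F j} ∈ w
  refine mem_of_superset hS fun j hj => ?_
  refine mem_of_superset (hg j) fun n hn => ?_
  have h2 : g n = j := hn
  simp only [Set.mem_preimage, h2]
  exact hj

lemma rkle_bind' {F : ℕ → Ultrafilter ℕ} {w t : Ultrafilter ℕ} {g : ℕ → ℕ}
    (hg : ∀ j, {n | g n = j} ∈ F j) {J : Set ℕ} (hJ : J ∈ w)
    (h : ∀ j ∈ J, RKLE t (F j)) : RKLE t (w.bind F) := by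
  choose! H hH using h
  refine ⟨fun n => H (g n) n, ult_eq_of_le' fun S hS => ?_⟩
  rw [Ultrafilter.mem_map]
  change {j | (fun n => H (g n) n) ⁻¹' S ∈ F j} ∈ w
  refine mem_of_superset hJ fun j hj => ?_
  have h1 : (H j) ⁻¹' S ∈ F j := by
    rw [← hH j hj] at hS; exact hS
  refine mem_of_superset (inter_mem (hg j) h1) fun n hn => ?_
  obtain ⟨hn1, hn2⟩ := hn
  simp only [mem_setOf_eq] at hn1
  simpa [Set.mem_preimage, hn1] using hn2

end Aux

theorem stmt11 (L : Ordinal → ℕ → Ordinal) (hL : IsLadderSystem L)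
    (u : Ordinal → Ultrafilter ℕ)
    (hu : ∀ α : Ordinal, α < omega1 → Order.IsSuccLimit α → ¬ IsPrincipal (u α))
    (f : Ordinal → ℕ → Ultrafilter ℕ) (hf : Admissible L u f) :
    ∀ β α : Ordinal, β ≤ α → α < omega1 → RKLE (u β) (vSeq u f α) := by
  suffices h : ∀ α : Ordinal, α < omega1 → ∀ β ≤ α, RKLE (u β) (vSeq u f α) by
    exact fun β α h1 h2 => h α h2 β h1
  intro α
  induction α using Ordinal.induction with
  | h α IH =>
  intro hα β hβ
  rcases Ordinal.zero_or_succ_or_isSuccLimit α with rfl | ⟨γ, rfl⟩ | hlim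
  · have hβ0 : β = 0 := le_antisymm hβ (zero_le (a := β))
    subst hβ0
    obtain ⟨hinj, hprin⟩ := hf.1
    choose c hc using hprin
    have hcinj : Function.Injective c := fun i j hij => hinj (by rw [hc i, hc j, hij])
    have hv : vSeq u f 0 = Ultrafilter.map c (u 0) := by
      rw [vSeq, extend_eq_bind']
      refine (ult_eq_of_le' fun S hS => ?_).symm
      have hS' : {j | S ∈ f 0 j} ∈ u 0 := hS
      rw [Ultrafilter.mem_map]
      refine Filter.mem_of_superset hS' fun j hj => ?_
      rw [Set.mem_setOf_eq, hc j] at hj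
      exact hj
    rw [hv]
    refine ⟨Function.invFun c, ?_⟩
    rw [Ultrafilter.map_map]
    have h2 : Function.invFun c ∘ c = id := funext (Function.leftInverse_invFun hcinj)
    rw [h2, Ultrafilter.map_id]
  · rw [← Ordinal.add_one_eq_succ] at hα hβ ⊢
    obtain ⟨hinj, hdisc, hiso⟩ := hf.2.1 γ hα
    obtain ⟨g, hg⟩ := exists_partition' hinj hdisc
    have hbind : vSeq u f (γ+1) = (u (γ+1)).bind (f (γ+1)) := by rw [vSeq, extend_eq_bind']
    rcases eq_or_lt_of_le hβ with rfl | hlt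
    · rw [hbind]; exact rkle_self_bind' hg
    · have hβγ : β ≤ γ := by rwa [Ordinal.add_one_eq_succ, Order.lt_succ_iff] at hlt
      have hγlt : γ < γ + 1 := by rw [Ordinal.add_one_eq_succ]; exact Order.lt_succ γ
      have hγ : γ < omega1 := lt_trans hγlt hα
      have hIH := IH γ hγlt hγ β hβγ
      rw [hbind]
      exact rkle_bind' hg Filter.univ_mem
        (fun j _ => rkle_trans' hIH (uiso_rkle_symm' (hiso j)))
  · obtain ⟨hinj, hdisc, hiso⟩ := hf.2.2 α hα hlim
    obtain ⟨g, hg⟩ := exists_partition' hinj hdisc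
    have hbind : vSeq u f α = (u α).bind (f α) := by rw [vSeq, extend_eq_bind']
    rcases eq_or_lt_of_le hβ with rfl | hlt
    · rw [hbind]; exact rkle_self_bind' hg
    · obtain ⟨hmono, hlt', hcof⟩ := hL α hα hlim
      obtain ⟨i₀, hi₀⟩ := hcof β hlt
      have hJ : {j : ℕ | i₀ ≤ j} ∈ u α := by
        by_contra hJc
        have hcm : {j : ℕ | i₀ ≤ j}ᶜ ∈ u α := Ultrafilter.compl_mem_iff_notMem.2 hJc
        have hfin : ({j : ℕ | i₀ ≤ j}ᶜ).Finite := by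
          have he : {j : ℕ | i₀ ≤ j}ᶜ = {j | j < i₀} := by ext j; simp [not_le]
          rw [he]; exact Set.finite_lt_nat i₀
        obtain ⟨x, _, hx⟩ := Ultrafilter.eq_pure_of_finite_mem hfin hcm
        exact hu α hα hlim ⟨x, hx⟩
      rw [hbind]
      refine rkle_bind' hg hJ (fun j hj => ?_)
      have h1 : β ≤ L α j := le_trans hi₀ (hmono.monotone hj)
      have h2 : L α j < α := hlt' j
      exact rkle_trans' (IH (L α j) h2 (lt_trans h2 hα) β h1) (uiso_rkle_symm' (hiso j))
end

section
/- Let K be a type of cardinality at most 2^ℵ₀. A function f : Ultrafilter K → βℕ is continuous if and only if there exist g : K × ℕ → ℕ and v ∈ βℕ such that f(u) = Ultrafilter.map g (u ⊗ v) for every u ∈ Ultrafilter K. -/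
section Aux

open Filter Set

/-- Membership in the ultrafilter bind. -/
lemma mem_ubind_s17 {X Y : Type*} {u : Ultrafilter X} {ψ : X → Ultrafilter Y} {s : Set Y} :
    s ∈ u.bind ψ ↔ {x | s ∈ ψ x} ∈ u := Iff.rfl

/-- Binding against a fixed family is continuous in the Stone topology. -/
lemma continuous_ubind {X Y : Type*} (ψ : X → Ultrafilter Y) :
    Continuous (fun u : Ultrafilter X => u.bind ψ) := by
  rw [ultrafilterBasis_is_basis.continuous_iff]
  rintro _ ⟨s, rfl⟩
  have : (fun u : Ultrafilter X => u.bind ψ) ⁻¹' {u | s ∈ u} = {u | {x | s ∈ ψ x} ∈ u} := rfl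
  rw [this]
  exact ultrafilter_isOpen_basic _

lemma map_tensor_eq_bind_s17 {X Y Z : Type*} (g : X × Y → Z) (v : Ultrafilter Y)
    (u : Ultrafilter X) :
    Ultrafilter.map g (tensor u v) = u.bind (fun x => v.map (fun y => g (x, y))) := by
  apply Ultrafilter.ext
  intro s
  simp only [Ultrafilter.mem_map, tensor, mem_ubind_s17]
  rfl

lemma pure_ubind {X Y : Type*} (x : X) (ψ : X → Ultrafilter Y) :
    (pure x : Ultrafilter X).bind ψ = ψ x := by
  apply Ultrafilter.ext
  intro s
  rw [mem_ubind_s17]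
  exact Ultrafilter.mem_pure

/-- Separation of finitely many distinct 0-1 sequences at some finite stage. -/
lemma exists_sep {ι : Type*} [Fintype ι] (c : ι → ℕ → Bool) (hc : Function.Injective c) :
    ∃ n : ℕ, ∀ i j : ι, (∀ m, m < n → c i m = c j m) → i = j := by
  classical
  set d : ι → ι → ℕ := fun i j =>
    if h : i ≠ j then Nat.find (Function.ne_iff.mp (hc.ne h)) + 1 else 0 with hd
  refine ⟨Finset.univ.sup fun i => Finset.univ.sup (d i), fun i j hmn => ?_⟩
  by_contra hij
  have h1a : d i j ≤ Finset.univ.sup (d i) := Finset.le_sup (Finset.mem_univ j)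
  have h1b : Finset.univ.sup (d i) ≤ Finset.univ.sup fun i => Finset.univ.sup (d i) :=
    Finset.le_sup (f := fun i => Finset.univ.sup (d i)) (Finset.mem_univ i)
  have h1 : d i j ≤ Finset.univ.sup fun i => Finset.univ.sup (d i) := le_trans h1a h1b
  have hfind : Nat.find (Function.ne_iff.mp (hc.ne hij)) < d i j := by
    rw [hd]; simp only [dif_pos hij]; omega
  exact Nat.find_spec (Function.ne_iff.mp (hc.ne hij))
    (hmn _ (lt_of_lt_of_le hfind h1))

/-- The countable "independent" index set used below. -/
abbrev IndD : Type := Σ n : ℕ, ((Fin n → Bool) → ℕ)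

instance : Infinite IndD :=
  Infinite.of_injective (fun k : ℕ => (⟨0, fun _ => k⟩ : IndD)) (by
    intro a b hab
    have := sigma_mk_injective hab
    exact congrFun this (fun i : Fin 0 => i.elim0))

/-- Every family of at most continuum many ultrafilters on `ℕ` has a uniform
Rudin–Keisler upper bound. -/
lemma exists_rk_ub {K : Type*} (hK : Cardinal.mk K ≤ (2 : Cardinal) ^ Cardinal.aleph0)
    (φ : K → Ultrafilter ℕ) :
    ∃ g : K × ℕ → ℕ, ∃ v : Ultrafilter ℕ,
      ∀ x : K, Ultrafilter.map (fun m => g (x, m)) v = φ x := by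
  classical
  -- an injection of `K` into `ℕ → Bool`
  have hcard : Cardinal.lift.{0} (Cardinal.mk K) ≤ Cardinal.lift (Cardinal.mk (ℕ → Bool)) := by
    have : Cardinal.mk (ℕ → Bool) = (2 : Cardinal) ^ Cardinal.aleph0 := by
      simp [Cardinal.mk_arrow]
    rw [this]
    simpa using hK
  obtain ⟨e⟩ := Cardinal.lift_mk_le'.mp hcard
  -- the functions on the countable index set
  set F : K → IndD → ℕ := fun x d => d.2 (fun i => e x i.1) with hF
  set L : Filter IndD := ⨅ x : K, Filter.comap (F x) (φ x : Filter ℕ) with hL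
  have hLne : L.NeBot := by
    rw [Filter.neBot_iff]
    intro hbot
    have h0 : (∅ : Set IndD) ∈ L := by rw [hbot]; exact Filter.mem_bot
    rw [hL, Filter.mem_iInf] at h0
    obtain ⟨I, Ifin, V, hV, hVE⟩ := h0
    choose A hA hAsub using fun i : I => Filter.mem_comap.mp (hV i)
    choose a ha using fun i : I => Ultrafilter.nonempty_of_mem (hA i)
    haveI : Finite I := Ifin.to_subtype
    haveI : Fintype I := Fintype.ofFinite I
    have hinj : Function.Injective (fun i : I => e i.1) :=
      e.injective.comp Subtype.val_injective
    obtain ⟨n, hn⟩ := exists_sep (fun i : I => e i.1) hinj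
    set tr : I → (Fin n → Bool) := fun i m => e i.1 m.1 with htr
    set h : (Fin n → Bool) → ℕ :=
      fun τ => if hτ : ∃ i : I, tr i = τ then a hτ.choose else 0 with hh
    set d₀ : IndD := ⟨n, h⟩ with hd₀
    have hmem : ∀ i : I, d₀ ∈ F i ⁻¹' A i := by
      intro i
      have hEx : ∃ i' : I, tr i' = tr i := ⟨i, rfl⟩
      have hch : hEx.choose = i := by
        apply hn
        intro m hm
        have := congrFun hEx.choose_spec (⟨m, hm⟩ : Fin n)
        exact this
      have : F i d₀ = a i := by
        show h (fun m : Fin n => e i.1 m.1) = a i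
        have htreq : (fun m : Fin n => e i.1 m.1) = tr i := rfl
        rw [htreq, hh]
        simp only [dif_pos hEx]
        rw [hch]
      rw [Set.mem_preimage, this]
      exact ha i
    have hd0 : d₀ ∈ ⋂ i : I, V i := Set.mem_iInter.mpr fun i => hAsub i (hmem i)
    rw [← hVE] at hd0
    exact hd0
  set v₀ : Ultrafilter IndD := Ultrafilter.of L with hv₀
  have hle : (v₀ : Filter IndD) ≤ L := Ultrafilter.of_le L
  have hmapv : ∀ x : K, Ultrafilter.map (F x) v₀ = φ x := by
    intro x
    rw [← Ultrafilter.coe_le_coe]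
    intro A hA
    rw [Ultrafilter.coe_map, Filter.mem_map]
    have h2 : L ≤ Filter.comap (F x) (φ x : Filter ℕ) := by
      rw [hL]; exact iInf_le _ x
    exact hle (h2 (Filter.preimage_mem_comap hA))
  -- transport across an equivalence `ℕ ≃ IndD`
  obtain ⟨E⟩ : Nonempty (ℕ ≃ IndD) := nonempty_equiv_of_countable
  refine ⟨fun p => F p.1 (E p.2), Ultrafilter.map E.symm v₀, fun x => ?_⟩
  rw [Ultrafilter.map_map]
  have : (fun m => F x (E m)) ∘ E.symm = F x := by
    funext d; simp
  rw [show ((fun m => F x (E m)) ∘ ⇑E.symm) = F x from this]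
  exact hmapv x

lemma continuous_tensor_map {K : Type*} (g : K × ℕ → ℕ) (v : Ultrafilter ℕ) :
    Continuous (fun u : Ultrafilter K => Ultrafilter.map g (tensor u v)) := by
  have : (fun u : Ultrafilter K => Ultrafilter.map g (tensor u v)) =
      fun u => u.bind (fun x => v.map (fun y => g (x, y))) := by
    funext u; exact map_tensor_eq_bind_s17 g v u
  rw [this]
  exact continuous_ubind _

end Aux

theorem stmt17 (K : Type*) (hK : Cardinal.mk K ≤ (2 : Cardinal) ^ Cardinal.aleph0)
    (f : Ultrafilter K → Ultrafilter ℕ) :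
    Continuous f ↔ ∃ g : K × ℕ → ℕ, ∃ v : Ultrafilter ℕ,
      ∀ u : Ultrafilter K, f u = Ultrafilter.map g (tensor u v) := by
  constructor
  · intro hf
    obtain ⟨g, v, hgv⟩ := exists_rk_ub hK (fun x => f (pure x))
    refine ⟨g, v, ?_⟩
    have hcont2 := continuous_tensor_map g v
    have heq : f = fun u : Ultrafilter K => Ultrafilter.map g (tensor u v) := by
      apply Continuous.ext_on denseRange_pure hf hcont2
      rintro _ ⟨x, rfl⟩
      show f (pure x) = Ultrafilter.map g (tensor (pure x) v)
      rw [map_tensor_eq_bind_s17, pure_ubind]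
      exact (hgv x).symm
    exact fun u => congrFun heq u
  · rintro ⟨g, v, h⟩
    have : f = fun u => Ultrafilter.map g (tensor u v) := funext h
    rw [this]
    exact continuous_tensor_map g v
end

section
/- Let κ be a cardinal, let A ⊆ βℕ have cardinality κ, let K be a type of cardinality κ, and let u ∈ βℕ. The following are equivalent: (i) u ∈ closure(A); (ii) there exist f : K → βℕ with range f ⊆ A and v ∈ Ultrafilter K such that f̃(v) = u. Moreover, if u ∈ closure(A) and f : K → βℕ satisfies range f = A, then there exists v ∈ Ultrafilter K with f̃(v) = u; and if additionally κ ≤ 2^ℵ₀, then (i) is also equivalent to: there exist g : K × ℕ → ℕ, v ∈ Ultrafilter K and w ∈ βℕ such that Ultrafilter.map (fun j => g (α, j)) w ∈ A for every α ∈ K and u = Ultrafilter.map g (v ⊗ w). -/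
open Set Filter

lemma aux_extend_mem_closure {X : Type*} (f : X → Ultrafilter ℕ) (v : Ultrafilter X) :
    Ultrafilter.extend f v ∈ closure (Set.range f) := by
  rw [mem_closure_iff_ultrafilter]
  refine ⟨v.map f, ?_, ultrafilter_extend_eq_iff.mp rfl⟩
  rw [Ultrafilter.mem_map, Set.preimage_range]
  exact Filter.univ_mem

lemma aux_exists_extend {X : Type*} {f : X → Ultrafilter ℕ} {u : Ultrafilter ℕ}
    (hu : u ∈ closure (Set.range f)) : ∃ v : Ultrafilter X, Ultrafilter.extend f v = u := by
  rcases mem_closure_iff_ultrafilter.mp hu with ⟨U, hrU, hU⟩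
  have hne : (Filter.comap f (U : Filter (Ultrafilter ℕ))).NeBot := by
    rw [Filter.comap_neBot_iff]
    intro t ht
    rcases U.nonempty_of_mem (Filter.inter_mem ht hrU) with ⟨y, hyt, x, rfl⟩
    exact ⟨x, hyt⟩
  obtain ⟨v, hv⟩ := Ultrafilter.exists_le (Filter.comap f (U : Filter (Ultrafilter ℕ)))
  have hle : (Ultrafilter.map f v : Filter (Ultrafilter ℕ)) ≤ U := by
    rw [Ultrafilter.coe_map]
    exact (Filter.map_mono hv).trans Filter.map_comap_le
  have hmap : Ultrafilter.map f v = U := Ultrafilter.coe_le_coe.mp hle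
  exact ⟨v, ultrafilter_extend_eq_iff.mpr (hmap ▸ hU)⟩

lemma aux_tensor {K : Type*} (g : K × ℕ → ℕ) (v : Ultrafilter K) (w : Ultrafilter ℕ) :
    Ultrafilter.extend (fun α => Ultrafilter.map (fun j => g (α, j)) w) v
      = Ultrafilter.map g (tensor v w) := by
  rw [ultrafilter_extend_eq_iff, ultrafilter_converges_iff]
  apply Ultrafilter.coe_injective
  apply Filter.ext
  intro s
  rw [Ultrafilter.mem_coe, Ultrafilter.mem_coe]
  rw [Ultrafilter.mem_map]
  show g ⁻¹' s ∈ (v.bind fun x => w.map fun y => (x, y)) ↔ _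
  rw [show (joinM (v.map fun α => Ultrafilter.map (fun j => g (α, j)) w))
      = (v.map fun α => Ultrafilter.map (fun j => g (α, j)) w).bind id from rfl]
  show _ ∈ (Filter.bind _ _) ↔ _ ∈ (Filter.bind _ _)
  rw [Filter.mem_bind', Filter.mem_bind']
  simp [Ultrafilter.mem_map]
  rfl

lemma aux_dense {K : Type} (ι : K → ℕ → Bool) (hι : Function.Injective ι) :
    ∃ g : K × ℕ → ℕ, ∀ (F : Finset K) (x : K → ℕ), ∃ n, ∀ α ∈ F, g (α, n) = x α := by
  classical
  have hT : Nonempty ((k : ℕ) × ((Fin k → Bool) → ℕ)) := ⟨⟨0, fun _ => 0⟩⟩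
  obtain ⟨τ, hτ⟩ := exists_surjective_nat ((k : ℕ) × ((Fin k → Bool) → ℕ))
  refine ⟨fun p => (τ p.2).2 (fun i => ι p.1 i), ?_⟩
  intro F x
  set D : K × K → ℕ := fun p =>
    if h : ι p.1 ≠ ι p.2 then (Function.ne_iff.mp h).choose else 0 with hD
  set k : ℕ := ((F ×ˢ F).sup D) + 1 with hk
  have hsep : ∀ a ∈ F, ∀ b ∈ F, a ≠ b →
      (fun i : Fin k => ι a i) ≠ (fun i : Fin k => ι b i) := by
    intro a ha b hb hab heq
    have hne : ι a ≠ ι b := fun h => hab (hι h)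
    have hm := (Function.ne_iff.mp hne).choose_spec
    have hlt : (Function.ne_iff.mp hne).choose < k := by
      have h1 : D (a, b) ≤ (F ×ˢ F).sup D :=
        Finset.le_sup (Finset.mem_product.mpr ⟨ha, hb⟩)
      have h2 : D (a, b) = (Function.ne_iff.mp hne).choose := by
        rw [hD]; exact dif_pos hne
      omega
    exact hm (congrFun heq ⟨_, hlt⟩)
  set σ : (Fin k → Bool) → ℕ := fun τ' =>
    if h : ∃ α, α ∈ F ∧ (fun i : Fin k => ι α i) = τ' then x h.choose else 0 with hσ
  obtain ⟨n, hn⟩ := hτ ⟨k, σ⟩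
  refine ⟨n, fun α hα => ?_⟩
  have hex : ∃ β, β ∈ F ∧ (fun i : Fin k => ι β i) = (fun i : Fin k => ι α i) := ⟨α, hα, rfl⟩
  have h1 : σ (fun i : Fin k => ι α i) = x α := by
    rw [hσ]
    simp only [dif_pos hex]
    congr 1
    by_contra hne
    exact hsep _ hex.choose_spec.1 _ hα hne hex.choose_spec.2
  show (τ n).2 (fun i => ι α i) = x α
  rw [hn]
  exact h1

lemma aux_rk {K : Type} (hK : Cardinal.mk K ≤ 2 ^ Cardinal.aleph0) (E : K → Ultrafilter ℕ) :
    ∃ g : K × ℕ → ℕ, ∃ w : Ultrafilter ℕ,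
      ∀ α, Ultrafilter.map (fun j => g (α, j)) w = E α := by
  classical
  have hcard : (2 : Cardinal) ^ Cardinal.aleph0 = Cardinal.mk (ℕ → Bool) := by
    rw [← Cardinal.mk_bool, ← Cardinal.mk_nat, Cardinal.power_def]
  rw [hcard, Cardinal.le_def] at hK
  obtain ⟨ι⟩ := hK
  obtain ⟨g, hg⟩ := aux_dense ι ι.injective
  set G : Set (Set ℕ) := {S | ∃ α, ∃ s ∈ E α, S = {n | g (α, n) ∈ s}} with hG
  have hFIP : ∀ t ⊆ G, t.Finite → (⋂₀ t).Nonempty := by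
    intro t hts ht
    rcases t.eq_empty_or_nonempty with rfl | hne
    · simp
    have hKne : Nonempty K := by
      rcases hne with ⟨S, hS⟩; rcases hts hS with ⟨α, -⟩; exact ⟨α⟩
    set a : Set ℕ → K := fun S => if h : S ∈ G then h.choose else Classical.arbitrary K with ha
    set sf : Set ℕ → Set ℕ := fun S =>
      if h : S ∈ G then h.choose_spec.choose else Set.univ with hsf
    have hspec : ∀ S ∈ t, sf S ∈ E (a S) ∧ S = {n | g (a S, n) ∈ sf S} := by
      intro S hS
      have h := hts hS
      rw [ha, hsf]
      simp only [dif_pos h]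
      exact ⟨h.choose_spec.choose_spec.1, h.choose_spec.choose_spec.2⟩
    set F : Finset K := ht.toFinset.image a with hF
    set T : K → Set ℕ := fun α => ⋂ S ∈ ht.toFinset.filter (fun S => a S = α), sf S with hT
    have hTmem : ∀ α, T α ∈ E α := by
      intro α
      rw [hT]
      rw [← Ultrafilter.mem_coe, Filter.biInter_finset_mem]
      intro S hS
      rw [Finset.mem_filter] at hS
      have := (hspec S (ht.mem_toFinset.mp hS.1)).1
      rwa [hS.2] at this
    set x : K → ℕ := fun α => ((E α).nonempty_of_mem (hTmem α)).choose with hx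
    have hxmem : ∀ α, x α ∈ T α := fun α => ((E α).nonempty_of_mem (hTmem α)).choose_spec
    obtain ⟨n, hn⟩ := hg F x
    refine ⟨n, ?_⟩
    intro S hS
    have h2 := hspec S hS
    rw [h2.2]
    show g (a S, n) ∈ sf S
    have haF : a S ∈ F := Finset.mem_image.mpr ⟨S, ht.mem_toFinset.mpr hS, rfl⟩
    rw [hn (a S) haF]
    have hxT := hxmem (a S)
    rw [hT] at hxT
    exact Set.mem_iInter₂.mp hxT S (Finset.mem_filter.mpr ⟨ht.mem_toFinset.mpr hS, rfl⟩)
  have hNB : Filter.NeBot (Filter.generate G) := Filter.generate_neBot_iff.mpr hFIP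
  obtain ⟨w, hw⟩ := Ultrafilter.exists_le (Filter.generate G)
  refine ⟨g, w, fun α => ?_⟩
  have hle : (Ultrafilter.map (fun j => g (α, j)) w : Filter ℕ) ≤ (E α : Filter ℕ) := by
    intro s hs
    have hmem : {n | g (α, n) ∈ s} ∈ Filter.generate G :=
      Filter.mem_generate_of_mem ⟨α, s, hs, rfl⟩
    exact hw hmem
  exact Ultrafilter.coe_le_coe.mp hle

theorem stmt18 (κ : Cardinal) (A : Set (Ultrafilter ℕ)) (hA : Cardinal.mk ↥A = κ)
    (K : Type) (hK : Cardinal.mk K = κ) (u : Ultrafilter ℕ) :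
    (u ∈ closure A ↔ ∃ f : K → Ultrafilter ℕ, Set.range f ⊆ A ∧
        ∃ v : Ultrafilter K, Ultrafilter.extend f v = u) ∧
    (u ∈ closure A → ∀ f : K → Ultrafilter ℕ, Set.range f = A →
        ∃ v : Ultrafilter K, Ultrafilter.extend f v = u) ∧
    (κ ≤ (2 : Cardinal) ^ Cardinal.aleph0 →
      (u ∈ closure A ↔ ∃ g : K × ℕ → ℕ, ∃ v : Ultrafilter K, ∃ w : Ultrafilter ℕ,
        (∀ α : K, Ultrafilter.map (fun j => g (α, j)) w ∈ A) ∧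
        u = Ultrafilter.map g (tensor v w))) := by
  classical
  subst hA
  obtain ⟨e⟩ : Nonempty (K ≃ ↥A) := Cardinal.eq.mp hK
  set f₀ : K → Ultrafilter ℕ := fun k => (e k : Ultrafilter ℕ) with hf₀
  have hrange : Set.range f₀ = A := by
    rw [hf₀]
    rw [show (fun k => (e k : Ultrafilter ℕ)) = Subtype.val ∘ e from rfl]
    rw [e.surjective.range_comp]
    exact Subtype.range_coe
  have part2 : u ∈ closure A → ∀ f : K → Ultrafilter ℕ, Set.range f = A →
      ∃ v : Ultrafilter K, Ultrafilter.extend f v = u := by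
    intro hu f hf
    exact aux_exists_extend (by rw [hf]; exact hu)
  refine ⟨?_, part2, ?_⟩
  · constructor
    · intro hu
      obtain ⟨v, hv⟩ := part2 hu f₀ hrange
      exact ⟨f₀, hrange.le, v, hv⟩
    · rintro ⟨f, hf, v, rfl⟩
      exact closure_mono hf (aux_extend_mem_closure f v)
  · intro hκ
    constructor
    · intro hu
      obtain ⟨g, w, hgw⟩ := aux_rk (hK.le.trans hκ) f₀
      obtain ⟨v, hv⟩ := part2 hu f₀ hrange
      refine ⟨g, v, w, fun α => ?_, ?_⟩
      · rw [hgw α]; exact (e α).2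
      · rw [← aux_tensor, ← hv]
        congr 1
        funext α
        exact (hgw α).symm
    · rintro ⟨g, v, w, hmem, rfl⟩
      have h := aux_extend_mem_closure (fun α => Ultrafilter.map (fun j => g (α, j)) w) v
      rw [aux_tensor] at h
      exact closure_mono (Set.range_subset_iff.mpr hmem) h
end
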